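/- Let G be a bipartite graph with vertex classes U, V such that all vertices in U have the same degree and all vertices in V have the same degree, and let A be its biadjacency matrix. Then σ₂(A) ≥ max over nonempty S ⊆ U, R ⊆ V of (1/√(|S|·|R|))·|e(S,R) − (e(U,V)/(|U|·|V|))·|S|·|R||, where e(X,Y) is the number of edges with one endpoint in X and the other in Y. -/

import Mathlib

open Matrix Finset
open scoped InnerProductSpace

/-- `f` rearranged in decreasing order. -/
noncomputable def sortDesc {N : ℕ} (f : Fin N → ℝ) : Fin N → ℝ :=
  fun i => f (Tuple.sort f i.rev)

/-- The singular values `σ₁(A) ≥ σ₂(A) ≥ ⋯` of `A` (0-indexed). -/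
noncomputable def singVal {m n : ℕ} (A : Matrix (Fin m) (Fin n) ℝ) (i : ℕ) : ℝ :=
  if h : i < n then
    Real.sqrt (sortDesc (show (Aᵀ * A).IsHermitian by
      simpa [Matrix.conjTranspose_eq_transpose_of_trivial] using
        Matrix.isHermitian_conjTranspose_mul_self A).eigenvalues ⟨i, h⟩)
  else 0

lemma sortDesc_anti {N : ℕ} (f : Fin N → ℝ) : Antitone (sortDesc f) := by
  intro i j hij
  exact Tuple.monotone_sort f (Fin.rev_le_rev.2 hij)

lemma inner_eq_dot {n : ℕ} (x y : EuclideanSpace ℝ (Fin n)) :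
    ⟪x, y⟫_ℝ = (x : Fin n → ℝ) ⬝ᵥ (y : Fin n → ℝ) := by
  simp [EuclideanSpace.inner_eq_star_dotProduct, dotProduct, mul_comm]

lemma dot_mulVec_symm {n : ℕ} {M : Matrix (Fin n) (Fin n) ℝ} (hM : M.IsHermitian)
    (z w : Fin n → ℝ) : z ⬝ᵥ (M *ᵥ w) = (M *ᵥ z) ⬝ᵥ w := by
  rw [dotProduct_mulVec]
  congr 1
  have hsymm : Mᵀ = M := by
    have := hM.eq
    rwa [conjTranspose_eq_transpose_of_trivial] at this
  rw [← hsymm, vecMul_transpose, hsymm]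

/-- Key spectral lemma: if `v` is an eigenvector for `μ`, `μ` dominates all
eigenvalues, and `y ⊥ v`, then the Rayleigh quotient of `y` is at most the
second largest eigenvalue. -/
lemma quad_form_le_second {n : ℕ} (hn : 1 < n) {M : Matrix (Fin n) (Fin n) ℝ}
    (hM : M.IsHermitian) (μ : ℝ)
    (hmax : ∀ k, hM.eigenvalues k ≤ μ)
    (v y : Fin n → ℝ) (hv : v ≠ 0) (hev : M *ᵥ v = μ • v)
    (horth : v ⬝ᵥ y = 0) :
    y ⬝ᵥ (M *ᵥ y) ≤ sortDesc hM.eigenvalues ⟨1, hn⟩ * (y ⬝ᵥ y) := by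
  set lam := hM.eigenvalues with hlam
  set b := hM.eigenvectorBasis with hb
  set u : Fin n → Fin n → ℝ := fun k => ⇑(b k) with hu
  have hF2 : ∀ z w : Fin n → ℝ, ∑ k, (z ⬝ᵥ u k) * (u k ⬝ᵥ w) = z ⬝ᵥ w := by
    intro z w
    simpa [inner_eq_dot] using b.sum_inner_mul_inner (x := WithLp.toLp 2 z) (y := WithLp.toLp 2 w)
  have heig : ∀ k, M *ᵥ u k = lam k • u k := fun k => hM.mulVec_eigenvectorBasis k
  have hcoef : ∀ k, lam k * (u k ⬝ᵥ v) = μ * (u k ⬝ᵥ v) := by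
    intro k
    calc lam k * (u k ⬝ᵥ v) = (lam k • u k) ⬝ᵥ v := by rw [smul_dotProduct]; rfl
      _ = (M *ᵥ u k) ⬝ᵥ v := by rw [heig]
      _ = u k ⬝ᵥ (M *ᵥ v) := (dot_mulVec_symm hM _ _).symm
      _ = u k ⬝ᵥ (μ • v) := by rw [hev]
      _ = μ * (u k ⬝ᵥ v) := by rw [dotProduct_smul]; rfl
  set s1 := sortDesc lam ⟨1, hn⟩ with hs1
  have hnpos : 0 < n := lt_trans one_pos hn
  set k₀ : Fin n := Tuple.sort lam (Fin.rev ⟨0, hnpos⟩) with hk₀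
  have huniq : ∀ k, s1 < lam k → k = k₀ := by
    intro k hk
    have hrepr : lam k = sortDesc lam (Fin.rev ((Tuple.sort lam).symm k)) := by
      simp [sortDesc, Fin.rev_rev]
    by_cases h : (⟨1, hn⟩ : Fin n) ≤ Fin.rev ((Tuple.sort lam).symm k)
    · exact absurd (hrepr ▸ sortDesc_anti lam h) (not_le.2 hk)
    · have h0 : Fin.rev ((Tuple.sort lam).symm k) = ⟨0, hnpos⟩ := by
        have := Fin.lt_iff_val_lt_val.1 (not_le.1 h)
        exact Fin.ext (Nat.lt_one_iff.1 this)
      have : (Tuple.sort lam).symm k = Fin.rev ⟨0, hnpos⟩ := by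
        rw [← h0, Fin.rev_rev]
      rw [hk₀, ← this, Equiv.apply_symm_apply]
  have hterm : ∀ k, lam k * (u k ⬝ᵥ y) ^ 2 ≤ s1 * (u k ⬝ᵥ y) ^ 2 := by
    intro k
    by_cases hks : lam k ≤ s1
    · exact mul_le_mul_of_nonneg_right hks (sq_nonneg _)
    · push_neg at hks
      have hcy : u k ⬝ᵥ y = 0 := by
        have hμk : μ = lam k := by
          by_contra hne
          have hall : ∀ j, u j ⬝ᵥ v = 0 := by
            intro j
            rcases eq_or_ne j k with rfl | hjk
            · rcases mul_eq_mul_right_iff.1 (hcoef j) with h | h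
              · exact absurd h.symm hne
              · exact h
            · have hjle : lam j ≤ s1 := by
                by_contra hj
                exact hjk ((huniq j (not_le.1 hj)).trans (huniq k hks).symm)
              rcases mul_eq_mul_right_iff.1 (hcoef j) with h | h
              · exact absurd h (by linarith [hmax k])
              · exact h
          have : v ⬝ᵥ v = 0 := by
            rw [← hF2 v v]
            exact Finset.sum_eq_zero fun j _ => by rw [hall j, mul_zero]
          exact hv (dotProduct_self_eq_zero.1 this)
        have hallj : ∀ j, j ≠ k → u j ⬝ᵥ v = 0 := by
          intro j hjk
          have hjle : lam j ≤ s1 := by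
            by_contra hj
            exact hjk ((huniq j (not_le.1 hj)).trans (huniq k hks).symm)
          rcases mul_eq_mul_right_iff.1 (hcoef j) with h | h
          · exact absurd h (by linarith)
          · exact h
        have hsum : v ⬝ᵥ y = (v ⬝ᵥ u k) * (u k ⬝ᵥ y) := by
          rw [← hF2 v y]
          rw [Finset.sum_eq_single k]
          · intro j _ hjk
            rw [dotProduct_comm, hallj j hjk, zero_mul]
          · intro h; exact absurd (Finset.mem_univ k) h
        have hvv : v ⬝ᵥ v = (v ⬝ᵥ u k) * (u k ⬝ᵥ v) := by
          rw [← hF2 v v]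
          rw [Finset.sum_eq_single k]
          · intro j _ hjk
            rw [dotProduct_comm, hallj j hjk, zero_mul]
          · intro h; exact absurd (Finset.mem_univ k) h
        have hvk : v ⬝ᵥ u k ≠ 0 := by
          intro h0
          rw [h0, zero_mul] at hvv
          exact hv (dotProduct_self_eq_zero.1 hvv)
        have := horth
        rw [hsum] at this
        exact (mul_eq_zero.1 this).resolve_left hvk
      rw [hcy]
      simp
  have hMy : y ⬝ᵥ (M *ᵥ y) = ∑ k, lam k * (u k ⬝ᵥ y) ^ 2 := by
    rw [← hF2 y (M *ᵥ y)]
    refine Finset.sum_congr rfl fun k _ => ?_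
    rw [dot_mulVec_symm hM, heig, smul_dotProduct]
    rw [dotProduct_comm (u k) y, smul_eq_mul]
    ring
  have hyy : y ⬝ᵥ y = ∑ k, (u k ⬝ᵥ y) ^ 2 := by
    rw [← hF2 y y]
    refine Finset.sum_congr rfl fun k _ => ?_
    rw [dotProduct_comm (u k) y]
    ring
  rw [hMy, hyy, Finset.mul_sum]
  exact Finset.sum_le_sum fun k _ => hterm k

lemma singVal_nonneg {m n : ℕ} (A : Matrix (Fin m) (Fin n) ℝ) (i : ℕ) :
    0 ≤ singVal A i := by
  unfold singVal
  split
  · exact Real.sqrt_nonneg _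
  · exact le_refl _

/-- The bipartite Expander Mixing Lemma.  Let `G` be a bipartite graph with
vertex classes `U = [m]`, `V = [n]`, given by its `0`–`1` biadjacency matrix
`A` (so `e(S,R) = ∑_{i ∈ S, j ∈ R} A i j`).  Assume `G` is semiregular:
all vertices of `U` have the same degree and all vertices of `V` have the same
degree.  Then for all nonempty `S ⊆ U`, `R ⊆ V`,
`σ₂(A) ≥ (1/√(|S||R|)) |e(S,R) − (e(U,V)/(|U||V|)) |S||R||`. -/
theorem bipartite_expander_mixing {m n : ℕ} (A : Matrix (Fin m) (Fin n) ℝ)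
    (hadj : ∀ i j, A i j = 0 ∨ A i j = 1)
    (hU : ∀ i i' : Fin m, ∑ j, A i j = ∑ j, A i' j)
    (hV : ∀ j j' : Fin n, ∑ i, A i j = ∑ i, A i j')
    (S : Finset (Fin m)) (R : Finset (Fin n)) (hS : S.Nonempty) (hR : R.Nonempty) :
    (1 / Real.sqrt (S.card * R.card)) *
        |(∑ i ∈ S, ∑ j ∈ R, A i j) -
          (∑ i, ∑ j, A i j) / (m * n) * (S.card * R.card)| ≤ singVal A 1 := by
  have hm : 0 < m := by obtain ⟨i0, _⟩ := hS; exact i0.pos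
  have hn0 : 0 < n := by obtain ⟨j0, _⟩ := hR; exact j0.pos
  have hmR : (0:ℝ) < m := by exact_mod_cast hm
  have hnR : (0:ℝ) < n := by exact_mod_cast hn0
  set e := ∑ i, ∑ j, A i j with he
  have hA0 : ∀ i j, 0 ≤ A i j := fun i j => by rcases hadj i j with h | h <;> simp [h]
  have hA2 : ∀ i j, A i j ^ 2 = A i j := fun i j => by rcases hadj i j with h | h <;> simp [h]
  have hrow : ∀ i, ∑ j, A i j = e / m := by
    intro i
    have h1 : e = m * ∑ j, A i j := by
      rw [he, Finset.sum_congr rfl fun i' _ => hU i' i]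
      simp [Finset.sum_const, Finset.card_univ, nsmul_eq_mul]
    rw [h1, mul_div_cancel_left₀ _ (ne_of_gt hmR)]
  have hcol : ∀ j, ∑ i, A i j = e / n := by
    intro j
    have h1 : e = n * ∑ i, A i j := by
      rw [he, show (∑ i, ∑ j, A i j) = ∑ j, ∑ i, A i j from Finset.sum_comm,
        Finset.sum_congr rfl fun j' _ => hV j' j]
      simp [Finset.sum_const, Finset.card_univ, nsmul_eq_mul]
    rw [h1, mul_div_cancel_left₀ _ (ne_of_gt hnR)]
  set x : Fin m → ℝ := fun i => (if i ∈ S then 1 else 0) - S.card / m with hx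
  set y : Fin n → ℝ := fun j => (if j ∈ R then 1 else 0) - R.card / n with hy
  have hAy : ∀ i, (A *ᵥ y) i = (∑ j ∈ R, A i j) - e / m * (R.card / n) := by
    intro i
    simp only [mulVec, dotProduct, hy, mul_sub]
    rw [Finset.sum_sub_distrib]
    congr 1
    · simp only [mul_ite, mul_one, mul_zero]
      rw [Finset.sum_ite_mem, Finset.univ_inter]
    · rw [← Finset.sum_mul, hrow i]
  have hQ : x ⬝ᵥ (A *ᵥ y) =
      (∑ i ∈ S, ∑ j ∈ R, A i j) - e / (m * n) * (S.card * R.card) := by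
    have hsum : x ⬝ᵥ (A *ᵥ y)
        = (∑ i ∈ S, ((∑ j ∈ R, A i j) - e / m * (R.card / n)))
          - S.card / m * (∑ i : Fin m, ((∑ j ∈ R, A i j) - e / m * (R.card / n))) := by
      simp only [dotProduct]
      rw [Finset.sum_congr rfl fun i _ => by rw [hAy i]]
      simp only [hx, sub_mul]
      rw [Finset.sum_sub_distrib, ← Finset.mul_sum]
      congr 1
      simp only [ite_mul, one_mul, zero_mul]
      rw [Finset.sum_ite_mem, Finset.univ_inter]
    have hTi : ∑ i : Fin m, ∑ j ∈ R, A i j = R.card * (e / n) := by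
      rw [show ∑ i : Fin m, ∑ j ∈ R, A i j = ∑ j ∈ R, ∑ i, A i j from Finset.sum_comm,
        Finset.sum_congr rfl fun j _ => hcol j]
      simp [Finset.sum_const, nsmul_eq_mul]
    rw [hsum, Finset.sum_sub_distrib, Finset.sum_sub_distrib, Finset.sum_const,
      Finset.sum_const, Finset.card_univ, Fintype.card_fin, hTi]
    field_simp
    ring
  have hScpos : (0:ℝ) < S.card := by exact_mod_cast hS.card_pos
  have hRcpos : (0:ℝ) < R.card := by exact_mod_cast hR.card_pos
  have hchiS : ∑ i, (if i ∈ S then (1:ℝ) else 0) = S.card := by simp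
  have hchiR : ∑ j, (if j ∈ R then (1:ℝ) else 0) = R.card := by simp
  have hx2 : x ⬝ᵥ x ≤ (S.card : ℝ) := by
    have h1 : x ⬝ᵥ x = S.card - 2 * (S.card / m) * S.card + m * (S.card / m) ^ 2 := by
      simp only [dotProduct, hx]
      have h2 : ∀ i : Fin m,
          ((if i ∈ S then (1:ℝ) else 0) - S.card / m) * ((if i ∈ S then (1:ℝ) else 0) - S.card / m)
          = (if i ∈ S then (1:ℝ) else 0) - 2 * (S.card / m) * (if i ∈ S then (1:ℝ) else 0)
            + (S.card / m) ^ 2 := by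
        intro i; by_cases h : i ∈ S <;> simp [h] <;> ring
      rw [Finset.sum_congr rfl fun i _ => h2 i, Finset.sum_add_distrib, Finset.sum_sub_distrib,
        hchiS, ← Finset.mul_sum, hchiS, Finset.sum_const, Finset.card_univ, Fintype.card_fin]
      simp [nsmul_eq_mul]
    have h3 : (S.card:ℝ) - 2 * (S.card / m) * S.card + m * (S.card / m) ^ 2
        = S.card - S.card * S.card / m := by clear hrow hcol; field_simp; ring
    rw [h1, h3]
    have : 0 ≤ (S.card:ℝ) * S.card / m := by clear hrow hcol; positivity
    linarith
  have hy2 : y ⬝ᵥ y ≤ (R.card : ℝ) := by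
    have h1 : y ⬝ᵥ y = R.card - 2 * (R.card / n) * R.card + n * (R.card / n) ^ 2 := by
      simp only [dotProduct, hy]
      have h2 : ∀ j : Fin n,
          ((if j ∈ R then (1:ℝ) else 0) - R.card / n) * ((if j ∈ R then (1:ℝ) else 0) - R.card / n)
          = (if j ∈ R then (1:ℝ) else 0) - 2 * (R.card / n) * (if j ∈ R then (1:ℝ) else 0)
            + (R.card / n) ^ 2 := by
        intro j; by_cases h : j ∈ R <;> simp [h] <;> ring
      rw [Finset.sum_congr rfl fun j _ => h2 j, Finset.sum_add_distrib, Finset.sum_sub_distrib,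
        hchiR, ← Finset.mul_sum, hchiR, Finset.sum_const, Finset.card_univ, Fintype.card_fin]
      simp [nsmul_eq_mul]
    have h3 : (R.card:ℝ) - 2 * (R.card / n) * R.card + n * (R.card / n) ^ 2
        = R.card - R.card * R.card / n := by clear hrow hcol; field_simp; ring
    rw [h1, h3]
    have : 0 ≤ (R.card:ℝ) * R.card / n := by clear hrow hcol; positivity
    linarith
  by_cases hn1 : 1 < n
  · -- main case: use the spectral lemma
    set hM : (Aᵀ * A).IsHermitian := (by simpa [Matrix.conjTranspose_eq_transpose_of_trivial] using
      Matrix.isHermitian_conjTranspose_mul_self A) with hMdef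
    have hAH : Aᴴ = Aᵀ := by
      rw [conjTranspose_eq_transpose_of_trivial]
    have hquad : ∀ z : Fin n → ℝ,
        (A *ᵥ z) ⬝ᵥ (A *ᵥ z) ≤ e / m * (e / n * (z ⬝ᵥ z)) := by
      intro z
      have step1 : ∀ i, (A *ᵥ z) i * (A *ᵥ z) i ≤ e / m * (∑ j, A i j * z j ^ 2) := by
        intro i
        have hCS := Finset.sum_mul_sq_le_sq_mul_sq Finset.univ
          (fun j => A i j) (fun j => A i j * z j)
        have e1 : ∑ j, A i j * (A i j * z j) = (A *ᵥ z) i := by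
          simp only [mulVec, dotProduct]
          refine Finset.sum_congr rfl fun j _ => ?_
          rw [← mul_assoc]
          rcases hadj i j with h | h <;> simp [h]
        have e2 : ∑ j, (A i j) ^ 2 = e / m := by
          rw [Finset.sum_congr rfl fun j _ => hA2 i j, hrow i]
        have e3 : ∑ j, (A i j * z j) ^ 2 = ∑ j, A i j * z j ^ 2 := by
          refine Finset.sum_congr rfl fun j _ => ?_
          rw [mul_pow, hA2]
        rw [e1, e2, e3] at hCS
        calc (A *ᵥ z) i * (A *ᵥ z) i = ((A *ᵥ z) i) ^ 2 := (sq _).symm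
          _ ≤ _ := hCS
      calc (A *ᵥ z) ⬝ᵥ (A *ᵥ z) = ∑ i, (A *ᵥ z) i * (A *ᵥ z) i := rfl
        _ ≤ ∑ i, e / m * (∑ j, A i j * z j ^ 2) := Finset.sum_le_sum fun i _ => step1 i
        _ = e / m * ∑ j, (∑ i, A i j) * z j ^ 2 := by
            rw [← Finset.mul_sum, Finset.sum_comm]
            congr 1
            exact Finset.sum_congr rfl fun j _ => (Finset.sum_mul _ _ _).symm
        _ = e / m * (e / n * (z ⬝ᵥ z)) := by
            rw [Finset.sum_congr rfl fun j _ => by rw [hcol j], ← Finset.mul_sum]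
            congr 1
            congr 1
            simp [dotProduct, sq]
    have hmax : ∀ k, hM.eigenvalues k ≤ e / m * (e / n) := by
      intro k
      have hval := hM.eigenvalues_eq k
      set u : Fin n → ℝ := ⇑(hM.eigenvectorBasis k) with hu
      have hnorm : u ⬝ᵥ u = 1 := by
        have h1 := hM.eigenvectorBasis.orthonormal.1 k
        have h2 := inner_eq_dot (hM.eigenvectorBasis k) (hM.eigenvectorBasis k)
        rw [real_inner_self_eq_norm_sq, h1] at h2
        exact h2.symm.trans (one_pow 2)
      have hval' : hM.eigenvalues k = (A *ᵥ u) ⬝ᵥ (A *ᵥ u) := by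
        rw [hval]
        have hstar : star u = u := by simp
        have : u ⬝ᵥ ((Aᴴ * A) *ᵥ u) = (A *ᵥ u) ⬝ᵥ (A *ᵥ u) := by
          rw [hAH, ← mulVec_mulVec, dotProduct_mulVec, vecMul_transpose]
        simp only [RCLike.re_to_real]
        rw [← this, hstar, hAH]
      rw [hval']
      calc (A *ᵥ u) ⬝ᵥ (A *ᵥ u) ≤ e / m * (e / n * (u ⬝ᵥ u)) := hquad u
        _ = e / m * (e / n) := by rw [hnorm, mul_one]
    have hone : (fun _ => (1:ℝ)) ≠ (0 : Fin n → ℝ) := by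
      intro h
      exact one_ne_zero (congrFun h ⟨0, hn0⟩)
    have hev : (Aᴴ * A) *ᵥ (fun _ => (1:ℝ)) = (e / m * (e / n)) • (fun _ => (1:ℝ)) := by
      rw [hAH, ← mulVec_mulVec]
      have h1 : A *ᵥ (fun _ => (1:ℝ)) = fun i => e / m := by
        funext i
        simp only [mulVec, dotProduct, mul_one]
        exact hrow i
      rw [h1]
      funext j
      simp only [mulVec, dotProduct, transpose_apply, Pi.smul_apply, smul_eq_mul, mul_one]
      rw [← Finset.sum_mul, hcol j]
      ring
    have horth : (fun _ => (1:ℝ)) ⬝ᵥ y = 0 := by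
      simp only [dotProduct, one_mul, hy]
      rw [Finset.sum_sub_distrib, hchiR, Finset.sum_const, Finset.card_univ, Fintype.card_fin]
      rw [nsmul_eq_mul, mul_div_cancel₀ _ (ne_of_gt hnR)]
      ring
    have hspec := quad_form_le_second hn1 hM (e / m * (e / n)) hmax
      (fun _ => 1) y hone hev horth
    set s1 := sortDesc hM.eigenvalues ⟨1, hn1⟩ with hs1def
    have hs1nonneg : 0 ≤ s1 := by
      rw [hs1def]
      unfold sortDesc
      exact (Matrix.posSemidef_conjTranspose_mul_self A).eigenvalues_nonneg _
    have hAyy : (A *ᵥ y) ⬝ᵥ (A *ᵥ y) = y ⬝ᵥ ((Aᴴ * A) *ᵥ y) := by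
      rw [hAH, ← mulVec_mulVec, Matrix.dotProduct_mulVec y Aᵀ (A *ᵥ y), vecMul_transpose]
    have hsing : singVal A 1 = Real.sqrt s1 := by
      rw [singVal, dif_pos hn1]
    rw [hsing, ← hQ]
    set Q := x ⬝ᵥ (A *ᵥ y) with hQdef
    have hAy2 : (A *ᵥ y) ⬝ᵥ (A *ᵥ y) ≤ s1 * R.card := by
      rw [hAyy]
      refine le_trans hspec ?_
      exact mul_le_mul_of_nonneg_left hy2 hs1nonneg
    have hCS : Q ^ 2 ≤ (x ⬝ᵥ x) * ((A *ᵥ y) ⬝ᵥ (A *ᵥ y)) := by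
      have h := Finset.sum_mul_sq_le_sq_mul_sq Finset.univ x (A *ᵥ y)
      have e1 : ∑ i, x i * (A *ᵥ y) i = Q := rfl
      have e2 : ∑ i, x i ^ 2 = x ⬝ᵥ x := by simp [dotProduct, sq]
      have e3 : ∑ i, ((A *ᵥ y) i) ^ 2 = (A *ᵥ y) ⬝ᵥ (A *ᵥ y) := by simp [dotProduct, sq]
      rw [e1, e2, e3] at h
      exact h
    have hxx0 : 0 ≤ x ⬝ᵥ x := by
      simp only [dotProduct]
      exact Finset.sum_nonneg fun i _ => mul_self_nonneg _
    have hQ2 : Q ^ 2 ≤ S.card * (s1 * R.card) := by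
      refine le_trans hCS ?_
      have h0 : 0 ≤ (A *ᵥ y) ⬝ᵥ (A *ᵥ y) := by
        simp only [dotProduct]
        exact Finset.sum_nonneg fun i _ => mul_self_nonneg _
      exact mul_le_mul hx2 hAy2 h0 (le_of_lt hScpos)
    have habs : |Q| ≤ Real.sqrt (S.card * (s1 * R.card)) := by
      rw [← Real.sqrt_sq_eq_abs]
      exact Real.sqrt_le_sqrt hQ2
    have hD : 0 < Real.sqrt ((S.card:ℝ) * R.card) := Real.sqrt_pos.2 (by clear hrow hcol; positivity)
    rw [div_mul_eq_mul_div, one_mul, div_le_iff₀ hD]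
    refine le_trans habs (le_of_eq ?_)
    rw [show (S.card:ℝ) * (s1 * R.card) = s1 * (S.card * R.card) by ring,
      Real.sqrt_mul hs1nonneg]
  · -- degenerate case n = 1
    have hn1' : n = 1 := by omega
    have hRuniv : R = Finset.univ := by
      apply Finset.eq_univ_of_card
      have h1 : R.card ≤ Fintype.card (Fin n) := R.card_le_univ
      have h2 : 1 ≤ R.card := hR.card_pos
      simp only [Fintype.card_fin] at *
      omega
    have hy0 : y = 0 := by
      funext j
      simp only [hy, hRuniv, Finset.mem_univ, if_true, Finset.card_univ, Fintype.card_fin]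
      rw [div_self (ne_of_gt hnR)]
      simp
    have hQ0 : x ⬝ᵥ (A *ᵥ y) = 0 := by
      rw [hy0]
      simp
    rw [← hQ, hQ0]
    simp only [abs_zero, mul_zero]
    exact singVal_nonneg A 1
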